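/- Let a ∈ ℝ^n, let D ⊆ ℝ^n be any set, and let 𝒜 = {a·dᵀ + d·aᵀ : d ∈ D} ⊆ S^n. Then J_+(𝒜) is ROG, i.e., J_+(𝒜) equals the convex hull of Γ^n ∩ J_+(𝒜). -/

import Mathlib

open Matrix

noncomputable section

/-- `J_+(𝒜)` : the PSD matrices `X` with `⟨A,X⟩ ≥ 0` for all `A ∈ 𝒜`. -/
def Jplus {n : ℕ} (𝒜 : Set (Matrix (Fin n) (Fin n) ℝ)) : Set (Matrix (Fin n) (Fin n) ℝ) :=
  {X | X.PosSemidef ∧ ∀ A ∈ 𝒜, 0 ≤ (A * X).trace}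

variable {n : ℕ}

lemma trace_vecMulVec_mul (u v : Fin n → ℝ) (X : Matrix (Fin n) (Fin n) ℝ) :
    (vecMulVec u v * X).trace = v ⬝ᵥ (X *ᵥ u) := by
  simp only [trace, diag_apply, Matrix.mul_apply, vecMulVec_apply, dotProduct, mulVec]
  rw [Finset.sum_comm]
  exact Finset.sum_congr rfl fun j _ => by
    simp [Finset.mul_sum, dotProduct]; exact Finset.sum_congr rfl fun i _ => by ring

lemma vecMulVec_mulVec' (v w x : Fin n → ℝ) :
    vecMulVec v w *ᵥ x = (w ⬝ᵥ x) • v := by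
  funext i
  simp [mulVec, dotProduct, vecMulVec_apply, Finset.sum_mul, Finset.mul_sum]
  exact Finset.sum_congr rfl fun j _ => by ring

lemma posSemidef_vecMulVec' (v : Fin n → ℝ) : (vecMulVec v v).PosSemidef := by
  refine .of_dotProduct_mulVec_nonneg ?_ ?_
  · ext i j; simp [vecMulVec_apply, conjTranspose_apply, mul_comm]
  · intro x
    rw [vecMulVec_mulVec']
    simp only [star_trivial, dotProduct_smul]
    have : x ⬝ᵥ v = v ⬝ᵥ x := dotProduct_comm _ _
    simp [smul_eq_mul, this]
    exact mul_self_nonneg _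

lemma dot_mulVec_symm {X : Matrix (Fin n) (Fin n) ℝ} (hX : Xᵀ = X)
    (u v : Fin n → ℝ) : u ⬝ᵥ (X *ᵥ v) = v ⬝ᵥ (X *ᵥ u) := by
  rw [dotProduct_mulVec]
  conv_lhs => rw [← hX]
  rw [vecMul_transpose, dotProduct_comm]

lemma smul_vecMulVec (c : ℝ) (v : Fin n → ℝ) (hc : 0 ≤ c) :
    c • vecMulVec v v = vecMulVec (Real.sqrt c • v) (Real.sqrt c • v) := by
  ext i j
  simp [vecMulVec_apply, Pi.smul_apply, smul_eq_mul]
  rw [show Real.sqrt c * v i * (Real.sqrt c * v j) = (Real.sqrt c * Real.sqrt c) * (v i * v j) by ring,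
    Real.mul_self_sqrt hc]

lemma posSemidef_smul {X : Matrix (Fin n) (Fin n) ℝ} (hX : X.PosSemidef)
    {c : ℝ} (hc : 0 ≤ c) : (c • X).PosSemidef := by
  refine .of_dotProduct_mulVec_nonneg ?_ ?_
  · show (c • X)ᴴ = c • X
    rw [conjTranspose_smul, hX.1]
    simp
  · intro x
    have := hX.dotProduct_mulVec_nonneg x
    simp only [smul_mulVec, dotProduct_smul, star_trivial, smul_eq_mul] at *
    positivity

lemma mem_Jplus_smul {𝒜 : Set (Matrix (Fin n) (Fin n) ℝ)} {X : Matrix (Fin n) (Fin n) ℝ}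
    (hX : X ∈ Jplus 𝒜) {c : ℝ} (hc : 0 ≤ c) : c • X ∈ Jplus 𝒜 := by
  refine ⟨posSemidef_smul hX.1 hc, fun A hA => ?_⟩
  rw [Matrix.mul_smul, trace_smul, smul_eq_mul]
  exact mul_nonneg hc (hX.2 A hA)

lemma convex_Jplus (𝒜 : Set (Matrix (Fin n) (Fin n) ℝ)) : Convex ℝ (Jplus 𝒜) := by
  intro X hX Y hY s t hs ht hst
  refine ⟨(posSemidef_smul hX.1 hs).add (posSemidef_smul hY.1 ht), fun A hA => ?_⟩
  rw [Matrix.mul_add, trace_add, Matrix.mul_smul, Matrix.mul_smul, trace_smul, trace_smul]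
  exact add_nonneg (smul_nonneg hs (hX.2 A hA)) (smul_nonneg ht (hY.2 A hA))

lemma sum_vecMulVec_rows (S : Matrix (Fin n) (Fin n) ℝ) :
    ∑ i, vecMulVec (S i) (S i) = Sᵀ * S := by
  ext j k
  simp [Matrix.sum_apply, vecMulVec_apply, Matrix.mul_apply, transpose_apply]

open scoped MatrixOrder in
lemma exists_psd_sqrt {M : Matrix (Fin n) (Fin n) ℝ} (hM : M.PosSemidef) :
    ∃ S : Matrix (Fin n) (Fin n) ℝ, S.PosSemidef ∧ S * S = M :=
  ⟨CFC.sqrt M, (CFC.sqrt_nonneg M).posSemidef, CFC.sqrt_mul_sqrt_self M hM.nonneg⟩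

/-- Theorem 4.2, [ARGUE2023, Theorem 1]: for a family of rank-two
matrices `a·dᵀ + d·aᵀ` (`d ∈ D`), the cone `J_+(𝒜)` is ROG. -/
theorem stmt_7 (n : ℕ) (a : Fin n → ℝ) (D : Set (Fin n → ℝ))
    (𝒜 : Set (Matrix (Fin n) (Fin n) ℝ))
    (h𝒜 : 𝒜 = {M | ∃ d ∈ D, M = vecMulVec a d + vecMulVec d a}) :
    Jplus 𝒜 = convexHull ℝ ({X | ∃ x : Fin n → ℝ, X = vecMulVec x x} ∩ Jplus 𝒜) := by
  apply Set.Subset.antisymm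
  · intro X hX
    obtain ⟨hPSD, htr⟩ := hX
    have hXsym : Xᵀ = X := by
      rw [← conjTranspose_eq_transpose_of_trivial]; exact hPSD.1
    set α := a ⬝ᵥ (X *ᵥ a) with hαdef
    have hα : 0 ≤ α := by simpa using hPSD.dotProduct_mulVec_nonneg a
    set t := (Real.sqrt α)⁻¹ with htdef
    set y := t • (X *ᵥ a) with hydef
    have htta : t * t * (α * α) = α := by
      by_cases h : α = 0
      · simp [h]
      · have h2 : t * t = α⁻¹ := by rw [htdef, ← mul_inv, Real.mul_self_sqrt hα]
        rw [h2]; field_simp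
    have hydot : ∀ w, y ⬝ᵥ w = t * ((X *ᵥ a) ⬝ᵥ w) := fun w => by
      rw [hydef, smul_dotProduct, smul_eq_mul]
    have hydot' : ∀ w, w ⬝ᵥ y = t * (w ⬝ᵥ (X *ᵥ a)) := fun w => by
      rw [dotProduct_comm, hydot, dotProduct_comm]
    set X' := X - vecMulVec y y with hX'def
    have hX'dot : ∀ u w, u ⬝ᵥ (X' *ᵥ w) = u ⬝ᵥ (X *ᵥ w) - (y ⬝ᵥ w) * (u ⬝ᵥ y) := by
      intro u w
      rw [hX'def, sub_mulVec, dotProduct_sub, vecMulVec_mulVec', dotProduct_smul, smul_eq_mul]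
    -- X' is PSD
    have hX'psd : X'.PosSemidef := by
      refine .of_dotProduct_mulVec_nonneg ?_ ?_
      · exact hPSD.1.sub (posSemidef_vecMulVec' y).1
      · intro x
        simp only [star_trivial]
        rw [hX'dot]
        set β := x ⬝ᵥ (X *ᵥ a) with hβdef
        have hyx : y ⬝ᵥ x = t * β := by
          rw [hydot, dotProduct_comm]
        have hxy : x ⬝ᵥ y = t * β := by rw [hydot']
        rw [hyx, hxy]
        by_cases h : α = 0
        · have hy0 : t = 0 := by rw [htdef, h]; simp
          rw [hy0]
          simpa using hPSD.dotProduct_mulVec_nonneg x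
        · have hαpos : 0 < α := lt_of_le_of_ne hα (Ne.symm h)
          have htt : t * t = α⁻¹ := by rw [htdef, ← mul_inv, Real.mul_self_sqrt hα]
          have key : 0 ≤ (x - (β/α) • a) ⬝ᵥ (X *ᵥ (x - (β/α) • a)) := by
            simpa using hPSD.dotProduct_mulVec_nonneg (x - (β/α) • a)
          have expand : (x - (β/α) • a) ⬝ᵥ (X *ᵥ (x - (β/α) • a))
              = x ⬝ᵥ (X *ᵥ x) - β * β / α := by
            rw [mulVec_sub, mulVec_smul, dotProduct_sub, sub_dotProduct, sub_dotProduct,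
              dotProduct_smul, dotProduct_smul, smul_dotProduct, smul_dotProduct]
            have hax : a ⬝ᵥ (X *ᵥ x) = β := by rw [dot_mulVec_symm hXsym, hβdef]
            rw [hax]
            simp only [smul_eq_mul, ← hαdef, ← hβdef]
            field_simp
            ring
          rw [expand] at key
          have : t * β * (t * β) = β * β / α := by
            rw [show t * β * (t * β) = (t * t) * (β * β) by ring, htt]
            field_simp
          rw [this]
          linarith
    have hX'a : a ⬝ᵥ (X' *ᵥ a) = 0 := by
      rw [hX'dot]
      have h1 : y ⬝ᵥ a = t * α := by rw [hydot, dotProduct_comm]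
      have h2 : a ⬝ᵥ y = t * α := by rw [hydot']
      rw [h1, h2, show t * α * (t * α) = t * t * (α * α) by ring, htta]
      ring
    obtain ⟨S, hSpsd, hSS⟩ := exists_psd_sqrt hX'psd
    have hSsym : Sᵀ = S := by rw [← conjTranspose_eq_transpose_of_trivial]; exact hSpsd.1
    have hSa : S *ᵥ a = 0 := by
      have h2 : a ᵥ* S = S *ᵥ a := by
        conv_lhs => rw [← hSsym]
        rw [vecMul_transpose]
      have h1 : a ⬝ᵥ (X' *ᵥ a) = (S *ᵥ a) ⬝ᵥ (S *ᵥ a) := by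
        rw [← hSS, ← mulVec_mulVec, dotProduct_mulVec, h2]
      exact dotProduct_self_eq_zero.mp (h1.symm.trans hX'a)
    have hrow : ∀ i, S i ⬝ᵥ a = 0 := fun i => congrFun hSa i
    have hdec : X = vecMulVec y y + ∑ i, vecMulVec (S i) (S i) := by
      rw [sum_vecMulVec_rows, hSsym, hSS, hX'def]
      abel
    have hymem : vecMulVec y y ∈ Jplus 𝒜 := by
      refine ⟨posSemidef_vecMulVec' y, ?_⟩
      intro A hA
      rw [h𝒜] at hA
      obtain ⟨d, hd, rfl⟩ := hA
      rw [Matrix.add_mul, trace_add, trace_vecMulVec_mul, trace_vecMulVec_mul,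
        vecMulVec_mulVec', vecMulVec_mulVec']
      simp only [dotProduct_smul, smul_eq_mul]
      set γ := d ⬝ᵥ (X *ᵥ a) with hγdef
      have hγ : 0 ≤ γ := by
        have h0 := htr (vecMulVec a d + vecMulVec d a) (by rw [h𝒜]; exact ⟨d, hd, rfl⟩)
        rw [Matrix.add_mul, trace_add, trace_vecMulVec_mul, trace_vecMulVec_mul,
          dot_mulVec_symm hXsym a d] at h0
        linarith
      have h1 : y ⬝ᵥ a = t * α := by rw [hydot, dotProduct_comm]
      have h2 : y ⬝ᵥ d = t * γ := by rw [hydot, dotProduct_comm]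
      have h3 : d ⬝ᵥ y = t * γ := by rw [hydot']
      have h4 : a ⬝ᵥ y = t * α := by rw [hydot']
      rw [h1, h2, h3, h4]
      nlinarith [mul_nonneg (mul_nonneg (mul_self_nonneg t) hα) hγ]
    have hvmem : ∀ i, vecMulVec (S i) (S i) ∈ Jplus 𝒜 := by
      intro i
      refine ⟨posSemidef_vecMulVec' _, ?_⟩
      intro A hA
      rw [h𝒜] at hA
      obtain ⟨d, hd, rfl⟩ := hA
      rw [Matrix.add_mul, trace_add, trace_vecMulVec_mul, trace_vecMulVec_mul,
        vecMulVec_mulVec', vecMulVec_mulVec']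
      simp only [dotProduct_smul, smul_eq_mul]
      rw [hrow i, dotProduct_comm a (S i), hrow i]
      simp
    set c : ℝ := (n : ℝ) + 1 with hcdef
    have hc : 0 ≤ c := by positivity
    set f : Fin (n+1) → Matrix (Fin n) (Fin n) ℝ :=
      Fin.cons (c • vecMulVec y y) (fun i => c • vecMulVec (S i) (S i)) with hfdef
    have hfmem : ∀ k, f k ∈ ({X | ∃ x : Fin n → ℝ, X = vecMulVec x x} ∩ Jplus 𝒜) := by
      intro k
      refine Fin.cases ?_ ?_ k
      · refine ⟨⟨Real.sqrt c • y, ?_⟩, ?_⟩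
        · rw [hfdef, Fin.cons_zero, smul_vecMulVec c y hc]
        · rw [hfdef, Fin.cons_zero]
          exact mem_Jplus_smul hymem hc
      · intro i
        refine ⟨⟨Real.sqrt c • S i, ?_⟩, ?_⟩
        · rw [hfdef, Fin.cons_succ, smul_vecMulVec c (S i) hc]
        · rw [hfdef, Fin.cons_succ]
          exact mem_Jplus_smul (hvmem i) hc
    have hsum : ∑ k, f k = c • X := by
      rw [hfdef, Fin.sum_cons, ← Finset.smul_sum, ← smul_add, ← hdec]
    have hXcm : Finset.univ.centerMass (fun _ : Fin (n+1) => (1:ℝ)) f = X := by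
      rw [Finset.centerMass]
      simp only [one_smul, Finset.sum_const, Finset.card_univ, Fintype.card_fin,
        nsmul_eq_mul, mul_one]
      rw [hsum, smul_smul]
      have hcc : ((n + 1 : ℕ) : ℝ)⁻¹ * c = 1 := by
        rw [hcdef]; push_cast; field_simp
      rw [hcc, one_smul]
    rw [← hXcm]
    refine Finset.centerMass_mem_convexHull _ (fun _ _ => zero_le_one) ?_ (fun k _ => hfmem k)
    · simp only [Finset.sum_const, Finset.card_univ, Fintype.card_fin, nsmul_eq_mul, mul_one]
      positivity
  · exact convexHull_min Set.inter_subset_right (convex_Jplus 𝒜)
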